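/- For every set A in the Borel σ-algebra generated by the product topology on (ℕ → ℕ) × Opens(ℕ → ℕ) (Baire topology on the first factor, Scott topology on the second), there exists a dense Gδ subset G of the Baire space such that for every f ∈ G: (f, (ℕ → ℕ) \ {f}) ∈ A if and only if (f, ℕ → ℕ) ∈ A. Here (ℕ → ℕ) \ {f} and ℕ → ℕ are regarded as elements of Opens(ℕ → ℕ), the former being open since the Baire space is T1. -/
import Mathlib


open Topology TopologicalSpace MeasureTheory Set

namespace Stmt1Aux

abbrev X := ℕ → ℕ

/-- The map `f ↦ (f, {f}ᶜ)`. -/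
noncomputable def phi (f : X) : X × Topology.WithScott (Opens X) :=
  (f, Topology.WithScott.toScott (⟨{f}ᶜ, isOpen_compl_singleton⟩ : Opens X))

/-- The map `f ↦ (f, ⊤)`. -/
noncomputable def psi (f : X) : X × Topology.WithScott (Opens X) :=
  (f, Topology.WithScott.toScott (⊤ : Opens X))

/-- A Scott-open family is an upper set. -/
lemma scott_upper {v : Set (Topology.WithScott (Opens X))} (hv : IsOpen v)
    {U V : Opens X} (hUV : U ≤ V) (hU : Topology.WithScott.toScott U ∈ v) :
    Topology.WithScott.toScott V ∈ v := by
  have h := Topology.IsScott.isUpperSet_of_isOpen (D := Set.univ) hv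
  exact h (by exact_mod_cast hUV) hU

/-- Scott open sets are inaccessible by monotone countable suprema. -/
lemma scott_iSup_mem {v : Set (Topology.WithScott (Opens X))} (hv : IsOpen v)
    (U : ℕ → Opens X) (hmono : Monotone U)
    (hsup : Topology.WithScott.toScott (⨆ n, U n) ∈ v) :
    ∃ n, Topology.WithScott.toScott (U n) ∈ v := by
  have h := (Topology.IsScott.isOpen_iff_isUpperSet_and_dirSupInaccOn
    (D := Set.univ) (α := Topology.WithScott (Opens X))).mp hv
  have hd : DirectedOn (· ≤ ·) (Set.range fun n => Topology.WithScott.toScott (U n)) := by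
    rintro _ ⟨a, rfl⟩ _ ⟨b, rfl⟩
    exact ⟨Topology.WithScott.toScott (U (max a b)), ⟨max a b, rfl⟩,
      show U a ≤ U (max a b) from hmono (le_max_left a b),
      show U b ≤ U (max a b) from hmono (le_max_right a b)⟩
  have hlub : IsLUB (Set.range fun n => Topology.WithScott.toScott (U n))
      (Topology.WithScott.toScott (⨆ n, U n)) := by
    constructor
    · rintro _ ⟨n, rfl⟩
      exact show U n ≤ ⨆ n, U n from le_iSup U n
    · intro b hb
      exact show (⨆ n, U n) ≤ Topology.WithScott.ofScott b from
        iSup_le fun n => hb ⟨n, rfl⟩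
  obtain ⟨w, hw, hwv⟩ := h.2 (Set.mem_univ _) (Set.range_nonempty _) hd hlub hsup
  obtain ⟨n, rfl⟩ := hw
  exact ⟨n, hwv⟩

/-- For an open `A`, `phi ⁻¹' A ⊆ psi ⁻¹' A`. -/
lemma phi_subset_psi {A : Set (X × Topology.WithScott (Opens X))} (hA : IsOpen A)
    {f : X} (hf : phi f ∈ A) : psi f ∈ A := by
  obtain ⟨u, v, hu, hv, hfu, hfv, huv⟩ := isOpen_prod_iff.mp hA f _ hf
  exact huv ⟨hfu, scott_upper hv le_top hfv⟩

/-- The set of opens `{g | ∃ k < n, g k ≠ f k}`. -/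
def approxCompl (f : X) (n : ℕ) : Opens X :=
  ⟨{g | ∃ k < n, g k ≠ f k}, by
    have : {g : X | ∃ k < n, g k ≠ f k} = ⋃ k ∈ Finset.range n,
        (fun g : X => g k) ⁻¹' {f k}ᶜ := by
      ext g; simp [and_comm]
    rw [this]
    exact isOpen_biUnion fun k _ => (isOpen_discrete _).preimage (continuous_apply k)⟩

lemma approxCompl_mono (f : X) : Monotone (approxCompl f) := by
  intro a b hab g hg
  obtain ⟨k, hk, hne⟩ := hg
  exact ⟨k, lt_of_lt_of_le hk hab, hne⟩

lemma iSup_approxCompl (f : X) :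
    (⨆ n, approxCompl f n) = (⟨{f}ᶜ, isOpen_compl_singleton⟩ : Opens X) := by
  apply Opens.ext
  rw [Opens.coe_iSup]
  ext g
  simp only [Set.mem_iUnion, approxCompl, Opens.coe_mk, Set.mem_setOf_eq,
    Set.mem_compl_iff, Set.mem_singleton_iff]
  constructor
  · rintro ⟨n, k, _, hne⟩ rfl; exact hne rfl
  · intro hne
    have : ∃ k, g k ≠ f k := by
      by_contra h
      push_neg at h
      exact hne (funext h)
    obtain ⟨k, hk⟩ := this
    exact ⟨k + 1, k, Nat.lt_succ_self k, hk⟩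

/-- For open `A`, the set `phi ⁻¹' A` is open. -/
lemma isOpen_phi_preimage {A : Set (X × Topology.WithScott (Opens X))} (hA : IsOpen A) :
    IsOpen {f : X | phi f ∈ A} := by
  rw [isOpen_iff_mem_nhds]
  intro f hf
  obtain ⟨u, v, hu, hv, hfu, hfv, huv⟩ := isOpen_prod_iff.mp hA f _ hf
  rw [← iSup_approxCompl f] at hfv
  obtain ⟨n, hn⟩ := scott_iSup_mem hv (approxCompl f) (approxCompl_mono f) hfv
  have hcyl : IsOpen {g : X | ∀ k < n, g k = f k} := by
    have : {g : X | ∀ k < n, g k = f k} = ⋂ k ∈ Finset.range n,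
        (fun g : X => g k) ⁻¹' {f k} := by
      ext g; simp
    rw [this]
    exact isOpen_biInter_finset fun k _ => (isOpen_discrete _).preimage (continuous_apply k)
  have hmem : f ∈ u ∩ {g : X | ∀ k < n, g k = f k} := ⟨hfu, fun _ _ => rfl⟩
  apply Filter.mem_of_superset ((hu.inter hcyl).mem_nhds hmem)
  rintro g ⟨hgu, hgc⟩
  have hle : approxCompl f n ≤ ⟨{g}ᶜ, isOpen_compl_singleton⟩ := by
    rintro h ⟨k, hk, hne⟩ hhg
    apply hne
    rw [Set.mem_singleton_iff] at hhg
    rw [hhg, hgc k hk]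
  exact huv ⟨hgu, scott_upper hv hle hn⟩

/-- For open `A`, `psi ⁻¹' A` is contained in the closure of `phi ⁻¹' A`. -/
lemma psi_subset_closure_phi {A : Set (X × Topology.WithScott (Opens X))} (hA : IsOpen A)
    {f : X} (hf : psi f ∈ A) : f ∈ closure {g : X | phi g ∈ A} := by
  obtain ⟨u, v, hu, hv, hfu, hfv, huv⟩ := isOpen_prod_iff.mp hA f _ hf
  rw [mem_closure_iff]
  intro V' hV' hfV'
  -- find a cylinder around `f` inside `u ∩ V'`
  obtain ⟨I, w, hw, hwsub⟩ := isOpen_pi_iff.mp (hu.inter hV') f ⟨hfu, hfV'⟩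
  set n : ℕ := (I.sup id) + 1 with hn
  set C : Set X := {g : X | ∀ k < n, g k = f k} with hC
  have hCsub : C ⊆ u ∩ V' := by
    intro g hg
    apply hwsub
    intro i hi
    have hin : i < n := Nat.lt_succ_of_le (Finset.le_sup (f := id) hi)
    rw [hg i hin]
    exact (hw i hi).2
  have hCclosed : IsClosed C := by
    have : C = ⋂ k ∈ Finset.range n, (fun g : X => g k) ⁻¹' {f k} := by
      ext g; simp [hC]
    rw [this]
    exact isClosed_biInter fun k _ => (isClosed_discrete _).preimage (continuous_apply k)
  -- directed family of opens whose sup is ⊤ but each member misses a point of C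
  set W : ℕ → Opens X := fun m =>
    ⟨Cᶜ ∪ {g : X | g n < m}, (hCclosed.isOpen_compl).union (by
      have : {g : X | g n < m} = (fun g : X => g n) ⁻¹' {j | j < m} := rfl
      rw [this]
      exact (isOpen_discrete _).preimage (continuous_apply n))⟩ with hW
  have hWmono : Monotone W := by
    intro a b hab g hg
    rcases hg with hg | hg
    · exact Or.inl hg
    · exact Or.inr (lt_of_lt_of_le hg hab)
  have hWsup : (⨆ m, W m) = ⊤ := by
    apply Opens.ext
    rw [Opens.coe_iSup]
    ext g
    simp only [Opens.coe_top, Set.mem_univ, iff_true, Set.mem_iUnion]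
    exact ⟨g n + 1, Or.inr (Nat.lt_succ_self _)⟩
  rw [← hWsup] at hfv
  obtain ⟨m, hm⟩ := scott_iSup_mem hv W hWmono hfv
  -- the witness point
  set g : X := fun k => if k < n then f k else m with hg
  have hgC : g ∈ C := fun k hk => by simp [hg, hk]
  have hgW : g ∉ (W m : Set X) := by
    rintro (h | h)
    · exact h hgC
    · simp only [Set.mem_setOf_eq, hg, lt_irrefl n, if_false] at h
      exact lt_irrefl m h
  have hle : W m ≤ ⟨{g}ᶜ, isOpen_compl_singleton⟩ := by
    intro h hh hhg
    rw [Set.mem_singleton_iff] at hhg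
    exact hgW (hhg ▸ hh)
  refine ⟨g, (hCsub hgC).2, ?_⟩
  exact huv ⟨(hCsub hgC).1, scott_upper hv hle hm⟩

/-- The key residual property, for all Borel sets. -/
lemma residual_key (A : Set (X × Topology.WithScott (Opens X)))
    (hA : MeasurableSet[borel (X × Topology.WithScott (Opens X))] A) :
    {f : X | phi f ∈ A ↔ psi f ∈ A} ∈ residual X := by
  induction A, hA using MeasurableSpace.generateFrom_induction with
  | hC t ht _ =>
    -- `t` is open
    have ht : IsOpen t := ht
    set S : Set X := {f : X | phi f ∈ t} with hS
    have hSopen : IsOpen S := isOpen_phi_preimage ht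
    have hsub : (closure S)ᶜ ∪ S ⊆ {f : X | phi f ∈ t ↔ psi f ∈ t} := by
      rintro f (hf | hf)
      · constructor
        · intro h; exact absurd (subset_closure (show f ∈ S from h)) hf
        · intro h; exact absurd (psi_subset_closure_phi ht h) hf
      · exact ⟨fun _ => phi_subset_psi ht hf, fun _ => hf⟩
    refine Filter.mem_of_superset (residual_of_dense_open
      (isClosed_closure.isOpen_compl.union hSopen) ?_) hsub
    -- density
    intro f
    rw [mem_closure_iff]
    intro V hV hfV
    by_cases h : (V ∩ S).Nonempty
    · obtain ⟨g, hg1, hg2⟩ := h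
      exact ⟨g, hg1, Or.inr hg2⟩
    · refine ⟨f, hfV, Or.inl ?_⟩
      intro hf
      rw [mem_closure_iff] at hf
      exact h (hf V hV hfV)
  | empty => simp
  | compl t _ ih =>
    have : {f : X | phi f ∈ tᶜ ↔ psi f ∈ tᶜ} = {f : X | phi f ∈ t ↔ psi f ∈ t} := by
      ext f; simp [not_iff_not]
    rw [this]; exact ih
  | iUnion s _ ih =>
    have : (⋂ n, {f : X | phi f ∈ s n ↔ psi f ∈ s n}) ⊆
        {f : X | phi f ∈ ⋃ n, s n ↔ psi f ∈ ⋃ n, s n} := by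
      intro f hf
      simp only [Set.mem_iInter, Set.mem_setOf_eq] at hf ⊢
      simp only [Set.mem_iUnion]
      exact ⟨fun ⟨n, hn⟩ => ⟨n, (hf n).mp hn⟩, fun ⟨n, hn⟩ => ⟨n, (hf n).mpr hn⟩⟩
    exact Filter.mem_of_superset ((countable_iInter_mem).mpr ih) this

end Stmt1Aux

/-- For every Borel subset `A` of `(ℕ → ℕ) × Opens(ℕ → ℕ)` (product of the Baire topology
and the Scott topology), there is a dense `Gδ` set `G` of Baire space such that for every
`f ∈ G`, `(f, (ℕ → ℕ) \ {f}) ∈ A ↔ (f, ℕ → ℕ) ∈ A`. -/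
theorem stmt1 (A : Set ((ℕ → ℕ) × Topology.WithScott (Opens (ℕ → ℕ))))
    (hA : MeasurableSet[borel ((ℕ → ℕ) × Topology.WithScott (Opens (ℕ → ℕ)))] A) :
    ∃ G : Set (ℕ → ℕ), Dense G ∧ IsGδ G ∧ ∀ f ∈ G,
      ((f, Topology.WithScott.toScott (⟨{f}ᶜ, isOpen_compl_singleton⟩ : Opens (ℕ → ℕ))) ∈ A ↔
        (f, Topology.WithScott.toScott (⊤ : Opens (ℕ → ℕ))) ∈ A) := by
  have h := Stmt1Aux.residual_key A hA
  obtain ⟨G, hGsub, hGδ, hGdense⟩ := mem_residual.mp h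
  exact ⟨G, hGdense, hGδ, fun f hf => hGsub hf⟩
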